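/- For all integers 1 ≤ s ≤ m, the number of masks in the recursively constructed set satisfies |M(s,m)| ≤ 2^s · m^{s−1}. -/

import Mathlib

/-- The recursively constructed mask set `M(s, m)`, viewed as a set of vectors of
length `2^m` indexed by the points of `𝔽₂^m` (i.e. functions `(Fin m → ZMod 2) → ZMod 2`).
For a point `p : Fin (m+1) → ZMod 2`, the coordinate `p 0` selects the half
(left half for `p 0 = 0`) and `Fin.tail p` the position inside that half, so that
the concatenation `[x, y]` corresponds to
`fun p => if p 0 = 0 then x (Fin.tail p) else y (Fin.tail p)`. -/
def maskSet : (m : ℕ) → ℕ → Set ((Fin m → ZMod 2) → ZMod 2)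
  | 0, _ => Set.univ
  | m + 1, s =>
    if s ≤ 1 then {fun _ => 0, fun _ => 1}
    else if m + 1 ≤ Nat.clog 2 s then Set.univ
    else
      ((fun g : (Fin m → ZMod 2) → ZMod 2 => fun p => g (Fin.tail p)) '' maskSet m s) ∪
        ⋃ i ∈ Finset.Ico 1 s,
          {f | ∃ x ∈ maskSet m i, ∃ y ∈ maskSet m (s - i),
            f = fun p => if p 0 = 0 then x (Fin.tail p) else y (Fin.tail p)}

private lemma ncard_image2_le' {α β γ : Type*} (f : α → β → γ) (A : Set α) (B : Set β)
    (hA : A.Finite) (hB : B.Finite) :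
    (Set.image2 f A B).ncard ≤ A.ncard * B.ncard := by
  rw [← Set.image_prod]
  calc ((fun p : α × β => f p.1 p.2) '' (A ×ˢ B)).ncard ≤ (A ×ˢ B).ncard :=
        Set.ncard_image_le (hA.prod hB)
    _ = A.ncard * B.ncard := by
        rw [← Nat.card_coe_set_eq, ← Nat.card_coe_set_eq, ← Nat.card_coe_set_eq,
          Nat.card_congr (Equiv.Set.prod A B), Nat.card_prod]

private lemma ncard_biUnion_le' {ι γ : Type*} [Finite γ] (t : Finset ι) (f : ι → Set γ) :
    (⋃ i ∈ t, f i).ncard ≤ ∑ i ∈ t, (f i).ncard := by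
  classical
  induction t using Finset.induction with
  | empty => simp
  | insert a u hx ih =>
    rw [Finset.set_biUnion_insert, Finset.sum_insert hx]
    exact le_trans (Set.ncard_union_le _ _) (Nat.add_le_add le_rfl ih)

private lemma binom_aux (t m : ℕ) : m ^ (t + 1) + (t + 1) * m ^ t ≤ (m + 1) ^ (t + 1) := by
  induction t with
  | zero => simp
  | succ t ih =>
    have h : (m + 1) ^ (t + 2) = (m + 1) * (m + 1) ^ (t + 1) := by ring
    calc m ^ (t + 2) + (t + 2) * m ^ (t + 1)
        ≤ m ^ (t + 2) + (t + 2) * m ^ (t + 1) + (t + 1) * m ^ t := Nat.le_add_right _ _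
      _ = (m + 1) * (m ^ (t + 1) + (t + 1) * m ^ t) := by ring
      _ ≤ (m + 1) * (m + 1) ^ (t + 1) := Nat.mul_le_mul_left _ ih
      _ = (m + 1) ^ (t + 2) := h.symm

private lemma maskSet_key : ∀ m s : ℕ, 1 ≤ s → Nat.clog 2 s ≤ m →
    (maskSet m s).ncard ≤ 2 ^ s * m ^ (s - 1) := by
  intro m
  induction m with
  | zero =>
    intro s hs hc
    have : s = 1 := by
      have := (Nat.clog_le_iff_le_pow (by norm_num : (1:ℕ) < 2)).1 hc
      omega
    subst this
    show (Set.univ : Set ((Fin 0 → ZMod 2) → ZMod 2)).ncard ≤ 2 ^ 1 * 0 ^ 0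
    rw [Set.ncard_univ, Nat.card_eq_fintype_card]
    simp
  | succ m ih =>
    intro s hs hc
    rcases eq_or_lt_of_le hs with h1 | h2
    · -- s = 1
      subst h1
      show (maskSet (m + 1) 1).ncard ≤ 2 ^ 1 * (m + 1) ^ 0
      have : maskSet (m + 1) 1 =
          ({fun _ => 0, fun _ => 1} : Set ((Fin (m+1) → ZMod 2) → ZMod 2)) := by
        simp [maskSet]
      rw [this]
      calc ({fun _ => 0, fun _ => 1} : Set ((Fin (m+1) → ZMod 2) → ZMod 2)).ncard
          ≤ ({fun _ => 1} : Set ((Fin (m+1) → ZMod 2) → ZMod 2)).ncard + 1 :=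
            Set.ncard_insert_le _ _
        _ ≤ 2 := by rw [Set.ncard_singleton]
        _ ≤ 2 ^ 1 * (m + 1) ^ 0 := by simp
    · -- s ≥ 2
      have hns : ¬ s ≤ 1 := by omega
      by_cases hcl : m + 1 ≤ Nat.clog 2 s
      · -- the full-space base case
        have hEq : maskSet (m + 1) s = Set.univ := by
          simp only [maskSet, if_neg hns, if_pos hcl]
        rw [hEq, Set.ncard_univ, Nat.card_eq_fintype_card]
        have hcard : Fintype.card ((Fin (m+1) → ZMod 2) → ZMod 2) = 2 ^ 2 ^ (m + 1) := by
          simp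
        rw [hcard]
        have hlt : 2 ^ m < s := (Nat.lt_clog_iff_pow_lt (by norm_num)).1 (by omega)
        have hle : s ≤ 2 ^ (m + 1) := (Nat.clog_le_iff_le_pow (by norm_num)).1 hc
        rcases Nat.eq_zero_or_pos m with hm | hm
        · subst hm
          have : s = 2 := by norm_num at hlt hle; omega
          subst this
          norm_num
        · -- m ≥ 1
          have h2m : 2 ^ m ≤ s - 1 := by omega
          have hexp : 2 ^ (m + 1) ≤ s + (s - 1) := by
            rw [pow_succ]
            omega
          calc (2:ℕ) ^ 2 ^ (m + 1) ≤ 2 ^ (s + (s - 1)) :=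
                Nat.pow_le_pow_right (by norm_num) hexp
            _ = 2 ^ s * 2 ^ (s - 1) := pow_add 2 s (s - 1)
            _ ≤ 2 ^ s * (m + 1) ^ (s - 1) :=
                Nat.mul_le_mul_left _ (Nat.pow_le_pow_left (by omega) _)
      · -- recursive case
        have hcm : Nat.clog 2 s ≤ m := by omega
        have hEq : maskSet (m + 1) s =
            ((fun g : (Fin m → ZMod 2) → ZMod 2 => fun p => g (Fin.tail p)) '' maskSet m s) ∪
              ⋃ i ∈ Finset.Ico 1 s,
                {f | ∃ x ∈ maskSet m i, ∃ y ∈ maskSet m (s - i),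
                  f = fun p => if p 0 = 0 then x (Fin.tail p) else y (Fin.tail p)} := by
          simp only [maskSet, if_neg hns, if_neg hcl]
        rw [hEq]
        -- bound each ⋃ member
        have hterm : ∀ i ∈ Finset.Ico 1 s,
            ({f | ∃ x ∈ maskSet m i, ∃ y ∈ maskSet m (s - i),
              f = fun p => if p 0 = 0 then x (Fin.tail p) else y (Fin.tail p)} :
                Set ((Fin (m+1) → ZMod 2) → ZMod 2)).ncard ≤ 2 ^ s * m ^ (s - 2) := by
          intro i hi
          rw [Finset.mem_Ico] at hi
          obtain ⟨hi1, hi2⟩ := hi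
          set F : ((Fin m → ZMod 2) → ZMod 2) → ((Fin m → ZMod 2) → ZMod 2) →
              ((Fin (m+1) → ZMod 2) → ZMod 2) :=
            fun x y => fun p => if p 0 = 0 then x (Fin.tail p) else y (Fin.tail p) with hF
          have hSeq : ({f | ∃ x ∈ maskSet m i, ∃ y ∈ maskSet m (s - i),
              f = fun p => if p 0 = 0 then x (Fin.tail p) else y (Fin.tail p)} :
                Set ((Fin (m+1) → ZMod 2) → ZMod 2)) =
              Set.image2 F (maskSet m i) (maskSet m (s - i)) := by
            ext f
            simp only [Set.mem_setOf_eq, Set.mem_image2, hF, eq_comm]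
          rw [hSeq]
          have h1 : (maskSet m i).ncard ≤ 2 ^ i * m ^ (i - 1) :=
            ih i hi1 (le_trans (Nat.clog_mono_right 2 (by omega)) hcm)
          have h2 : (maskSet m (s - i)).ncard ≤ 2 ^ (s - i) * m ^ (s - i - 1) :=
            ih (s - i) (by omega) (le_trans (Nat.clog_mono_right 2 (by omega)) hcm)
          calc (Set.image2 F (maskSet m i) (maskSet m (s - i))).ncard
              ≤ (maskSet m i).ncard * (maskSet m (s - i)).ncard :=
                ncard_image2_le' _ _ _ (Set.toFinite _) (Set.toFinite _)
            _ ≤ (2 ^ i * m ^ (i - 1)) * (2 ^ (s - i) * m ^ (s - i - 1)) :=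
                Nat.mul_le_mul h1 h2
            _ = 2 ^ s * m ^ (s - 2) := by
                rw [show (2 ^ i * m ^ (i - 1)) * (2 ^ (s - i) * m ^ (s - i - 1)) =
                    (2 ^ i * 2 ^ (s - i)) * (m ^ (i - 1) * m ^ (s - i - 1)) by ring,
                  ← pow_add, ← pow_add]
                congr 1 <;> congr 1 <;> omega
        have hun : (⋃ i ∈ Finset.Ico 1 s,
            {f | ∃ x ∈ maskSet m i, ∃ y ∈ maskSet m (s - i),
              f = fun p => if p 0 = 0 then x (Fin.tail p) else y (Fin.tail p)} :
                Set ((Fin (m+1) → ZMod 2) → ZMod 2)).ncard ≤ (s - 1) * (2 ^ s * m ^ (s - 2)) := by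
          calc _ ≤ ∑ i ∈ Finset.Ico 1 s, ({f | ∃ x ∈ maskSet m i, ∃ y ∈ maskSet m (s - i),
                f = fun p => if p 0 = 0 then x (Fin.tail p) else y (Fin.tail p)} :
                  Set ((Fin (m+1) → ZMod 2) → ZMod 2)).ncard := ncard_biUnion_le' _ _
            _ ≤ ∑ _i ∈ Finset.Ico 1 s, 2 ^ s * m ^ (s - 2) := Finset.sum_le_sum hterm
            _ = (s - 1) * (2 ^ s * m ^ (s - 2)) := by
                rw [Finset.sum_const, Nat.card_Ico, smul_eq_mul]
        have himg : (((fun g : (Fin m → ZMod 2) → ZMod 2 =>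
            fun p : Fin (m+1) → ZMod 2 => g (Fin.tail p)) ''
            maskSet m s)).ncard ≤ 2 ^ s * m ^ (s - 1) :=
          le_trans (Set.ncard_image_le (Set.toFinite _)) (ih s hs hcm)
        refine le_trans (Set.ncard_union_le _ _) ?_
        refine le_trans (Nat.add_le_add himg hun) ?_
        obtain ⟨t, rfl⟩ : ∃ t, s = t + 2 := ⟨s - 2, (Nat.sub_add_cancel h2).symm⟩
        have hb := binom_aux t m
        have e1 : t + 2 - 1 = t + 1 := rfl
        have e2 : t + 2 - 2 = t := rfl
        rw [e1, e2]
        calc 2 ^ (t + 2) * m ^ (t + 1) + (t + 1) * (2 ^ (t + 2) * m ^ t)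
            = 2 ^ (t + 2) * (m ^ (t + 1) + (t + 1) * m ^ t) := by ring
          _ ≤ 2 ^ (t + 2) * (m + 1) ^ (t + 1) := Nat.mul_le_mul_left _ hb

/-- The number of masks in `M(s,m)` is at most `2^s * m^(s-1)`. -/
theorem maskSet_card_upper (s m : ℕ) (hs : 1 ≤ s) (hsm : s ≤ m) :
    (maskSet m s).ncard ≤ 2 ^ s * m ^ (s - 1) := by
  apply maskSet_key m s hs
  have h1 : Nat.clog 2 s ≤ s :=
    (Nat.clog_le_iff_le_pow (by norm_num)).2 (le_of_lt (Nat.lt_two_pow_self (n := s)))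
  omega
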